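/- The functions H₁(x,y,z) = (y² − x²)/2 and H₂(x,y,z) = (y − x)²·e^(x²+z²) are both first integrals of the Rikitake system ẋ = yz, ẏ = xz, ż = 1 − xy on ℝ³, and they are functionally independent. -/

import Mathlib

lemma d1x (x y : ℝ) : deriv (fun t : ℝ => (y ^ 2 - t ^ 2) / 2) x = -x := by
  have h : HasDerivAt (fun t : ℝ => (y ^ 2 - t ^ 2) / 2) (-x) x := by
    have := ((hasDerivAt_pow 2 x).const_sub (y ^ 2)).div_const 2
    exact this.congr_deriv (by norm_num; ring)
  exact h.deriv

lemma d1y (x y : ℝ) : deriv (fun t : ℝ => (t ^ 2 - x ^ 2) / 2) y = y := by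
  have h : HasDerivAt (fun t : ℝ => (t ^ 2 - x ^ 2) / 2) y y := by
    have := ((hasDerivAt_pow 2 y).sub_const (x ^ 2)).div_const 2
    exact this.congr_deriv (by norm_num)
  exact h.deriv

lemma d2x (x y z : ℝ) :
    deriv (fun t : ℝ => (y - t) ^ 2 * Real.exp (t ^ 2 + z ^ 2)) x
      = (2 * (y - x) * (-1)) * Real.exp (x ^ 2 + z ^ 2)
        + (y - x) ^ 2 * (Real.exp (x ^ 2 + z ^ 2) * (2 * x)) := by
  have h1 : HasDerivAt (fun t : ℝ => (y - t) ^ 2) (2 * (y - x) * (-1)) x := by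
    have := ((hasDerivAt_id x).const_sub y).pow 2
    simpa [Function.comp_def, Pi.pow_def] using this
  have h2 : HasDerivAt (fun t : ℝ => Real.exp (t ^ 2 + z ^ 2))
      (Real.exp (x ^ 2 + z ^ 2) * (2 * x)) x := by
    have hp : HasDerivAt (fun t : ℝ => t ^ 2 + z ^ 2) (2 * x) x := by
      have := (hasDerivAt_pow 2 x).add_const (z ^ 2)
      simpa using this
    simpa [Function.comp_def] using (Real.hasDerivAt_exp (x ^ 2 + z ^ 2)).comp x hp
  exact (h1.mul h2).deriv

lemma d2y (x y z : ℝ) :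
    deriv (fun t : ℝ => (t - x) ^ 2 * Real.exp (x ^ 2 + z ^ 2)) y
      = 2 * (y - x) * Real.exp (x ^ 2 + z ^ 2) := by
  have h : HasDerivAt (fun t : ℝ => (t - x) ^ 2 * Real.exp (x ^ 2 + z ^ 2))
      (2 * (y - x) * Real.exp (x ^ 2 + z ^ 2)) y := by
    have := (((hasDerivAt_id y).sub_const x).pow 2).mul_const (Real.exp (x ^ 2 + z ^ 2))
    simpa using this
  exact h.deriv

lemma d2z (x y z : ℝ) :
    deriv (fun t : ℝ => (y - x) ^ 2 * Real.exp (x ^ 2 + t ^ 2)) z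
      = (y - x) ^ 2 * (Real.exp (x ^ 2 + z ^ 2) * (2 * z)) := by
  have hp : HasDerivAt (fun t : ℝ => x ^ 2 + t ^ 2) (2 * z) z := by
    have := (hasDerivAt_pow 2 z).const_add (x ^ 2)
    simpa using this
  have h2 : HasDerivAt (fun t : ℝ => Real.exp (x ^ 2 + t ^ 2))
      (Real.exp (x ^ 2 + z ^ 2) * (2 * z)) z := by
    simpa [Function.comp_def] using (Real.hasDerivAt_exp (x ^ 2 + z ^ 2)).comp z hp
  have := h2.const_mul ((y - x) ^ 2)
  simpa [mul_comm, mul_left_comm] using this.deriv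

/-- shear homeomorphism (x,y,z) ↦ (x, y - x, z) -/
noncomputable def shear : (ℝ × ℝ × ℝ) ≃ₜ (ℝ × ℝ × ℝ) where
  toFun p := (p.1, p.2.1 - p.1, p.2.2)
  invFun q := (q.1, q.2.1 + q.1, q.2.2)
  left_inv p := by simp
  right_inv q := by simp
  continuous_toFun := by fun_prop
  continuous_invFun := by fun_prop

/-- Gradient of a function of three real variables, via partial derivatives. -/
noncomputable def grad3 (H : ℝ → ℝ → ℝ → ℝ) (x y z : ℝ) : Fin 3 → ℝ :=
  ![deriv (fun t => H t y z) x, deriv (fun t => H x t z) y, deriv (fun t => H x y t) z]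

theorem stmt12 :
    (∀ x y z : ℝ,
      deriv (fun t => (y ^ 2 - t ^ 2) / 2) x * (y * z) +
        deriv (fun t => (t ^ 2 - x ^ 2) / 2) y * (x * z) +
        deriv (fun _ : ℝ => (y ^ 2 - x ^ 2) / 2) z * (1 - x * y) = 0) ∧
    (∀ x y z : ℝ,
      deriv (fun t => (y - t) ^ 2 * Real.exp (t ^ 2 + z ^ 2)) x * (y * z) +
        deriv (fun t => (t - x) ^ 2 * Real.exp (x ^ 2 + z ^ 2)) y * (x * z) +
        deriv (fun t => (y - x) ^ 2 * Real.exp (x ^ 2 + t ^ 2)) z * (1 - x * y) = 0) ∧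
    (∃ S : Set (ℝ × ℝ × ℝ), IsOpen S ∧ Dense S ∧
      ∀ p ∈ S, LinearIndependent ℝ
        ![grad3 (fun x y _ => (y ^ 2 - x ^ 2) / 2) p.1 p.2.1 p.2.2,
          grad3 (fun x y z => (y - x) ^ 2 * Real.exp (x ^ 2 + z ^ 2)) p.1 p.2.1 p.2.2]) := by
  refine ⟨fun x y z => by rw [d1x, d1y, deriv_const]; ring,
    fun x y z => by rw [d2x, d2y, d2z]; ring, ?_⟩
  set T : Set (ℝ × ℝ × ℝ) := ({0}ᶜ : Set ℝ) ×ˢ (({0}ᶜ : Set ℝ) ×ˢ ({0}ᶜ : Set ℝ)) with hT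
  refine ⟨shear ⁻¹' T,
    (isOpen_compl_singleton.prod (isOpen_compl_singleton.prod
      isOpen_compl_singleton)).preimage shear.continuous,
    ((dense_compl_singleton 0).prod ((dense_compl_singleton 0).prod
      (dense_compl_singleton 0))).preimage shear.isOpenMap, ?_⟩
  rintro ⟨x, y, z⟩ hp
  simp only [hT, shear, Set.mem_preimage, Set.mem_prod, Set.mem_compl_iff,
    Set.mem_singleton_iff, Homeomorph.homeomorph_mk_coe, Equiv.coe_fn_mk] at hp
  obtain ⟨hx, hyx, hz⟩ := hp
  have hg1 : grad3 (fun x y _ => (y ^ 2 - x ^ 2) / 2) x y z = ![-x, y, 0] := by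
    simp only [grad3, d1x, d1y, deriv_const]
  have hg2 : grad3 (fun x y z => (y - x) ^ 2 * Real.exp (x ^ 2 + z ^ 2)) x y z
      = ![(2 * (y - x) * (-1)) * Real.exp (x ^ 2 + z ^ 2)
            + (y - x) ^ 2 * (Real.exp (x ^ 2 + z ^ 2) * (2 * x)),
          2 * (y - x) * Real.exp (x ^ 2 + z ^ 2),
          (y - x) ^ 2 * (Real.exp (x ^ 2 + z ^ 2) * (2 * z))] := by
    simp only [grad3, d2x, d2y, d2z]
  rw [hg1, hg2]
  have hC : (y - x) ^ 2 * (Real.exp (x ^ 2 + z ^ 2) * (2 * z)) ≠ 0 := by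
    have h1 : y - x ≠ 0 := sub_ne_zero.mpr fun h => hyx (by rw [h]; ring)
    positivity
  rw [linearIndependent_fin2]
  simp only [Matrix.cons_val_one, Matrix.head_cons, Matrix.cons_val_zero]
  constructor
  · intro h
    exact hC (by simpa using congrFun h 2)
  · intro a h
    have h2 := congrFun h 2
    have h0 := congrFun h 0
    simp only [Pi.smul_apply, smul_eq_mul, Matrix.cons_val_two, Matrix.tail_cons,
      Matrix.head_cons, Matrix.cons_val_zero] at h2 h0
    have ha : a = 0 := by
      rcases mul_eq_zero.mp h2 with h' | h'
      · exact h'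
      · exact absurd h' hC
    rw [ha, zero_mul] at h0
    exact hx (neg_eq_zero.mp h0.symm)
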